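/- Fix n ∈ ℕ and real parameters α₁, α₂, β₀, β₁, β₂ with α₁ ≠ 0 and β₂ ≠ 0, and let Q_j be the polynomials defined by Q_{−1} = 0, Q_0 = 1, Q_j(ζ) = (ζ − (j+n)((j+n−1)α₂ + β₁)) Q_{j−1}(ζ) − (j−1)(j+n) β₂ ((j+n−1)α₁ + β₀) Q_{j−2}(ζ) for j ≥ 1. Let k ≥ 0 and assume (n+1+β₀/α₁)_j ≠ 0 for 1 ≤ j ≤ k. Then for all real ζ₁ ≠ ζ₂: Σ_{j=0}^{k} Q_j(ζ₁) Q_j(ζ₂) / (j! (n+2)_j (β₂ α₁)^j (n+1+β₀/α₁)_j) = (Q_{k+1}(ζ₁) Q_k(ζ₂) − Q_k(ζ₁) Q_{k+1}(ζ₂)) / (k! (n+2)_k (β₂ α₁)^k (n+1+β₀/α₁)_k (ζ₁ − ζ₂)). -/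

import Mathlib

open Polynomial

private lemma heun_aux_A_succ (n k : ℕ) (α₁ β₀ β₂ : ℝ) (hα₁ : α₁ ≠ 0) :
    ((k+1).factorial : ℝ) * (ascPochhammer ℝ (k+1)).eval ((n : ℝ) + 2) * (β₂ * α₁) ^ (k+1)
      * (ascPochhammer ℝ (k+1)).eval ((n : ℝ) + 1 + β₀ / α₁)
    = ((k.factorial : ℝ) * (ascPochhammer ℝ k).eval ((n : ℝ) + 2) * (β₂ * α₁) ^ k
        * (ascPochhammer ℝ k).eval ((n : ℝ) + 1 + β₀ / α₁))
      * ((((k:ℝ)+2) - 1) * (((k:ℝ)+2) + (n:ℝ)) * β₂ * ((((k:ℝ)+2) + (n:ℝ) - 1) * α₁ + β₀)) := by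
  rw [ascPochhammer_succ_right, Nat.factorial_succ]
  simp only [eval_mul, eval_add, eval_X, eval_natCast, Nat.cast_mul, Nat.cast_add, Nat.cast_one]
  field_simp
  ring

/-- Christoffel–Darboux formula for the quotient orthogonal polynomial sequence
obtained by factoring the critical polynomial out of the finite orthogonal
polynomial sequence attached to the generalized confluent Heun equation. -/
theorem heun_quotient_christoffel_darboux
    (n : ℕ) (α₁ α₂ β₀ β₁ β₂ : ℝ) (hα₁ : α₁ ≠ 0) (hβ₂ : β₂ ≠ 0)
    (Q : ℤ → Polynomial ℝ) (hQneg : Q (-1) = 0) (hQ0 : Q 0 = 1)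
    (hQrec : ∀ j : ℕ, 1 ≤ j → Q (j : ℤ) =
      (X - C (((j : ℝ) + (n : ℝ)) * (((j : ℝ) + (n : ℝ) - 1) * α₂ + β₁))) * Q ((j : ℤ) - 1)
        - C (((j : ℝ) - 1) * ((j : ℝ) + (n : ℝ)) * β₂ * (((j : ℝ) + (n : ℝ) - 1) * α₁ + β₀))
          * Q ((j : ℤ) - 2))
    (k : ℕ)
    (hpoch : ∀ j : ℕ, 1 ≤ j → j ≤ k → (ascPochhammer ℝ j).eval ((n : ℝ) + 1 + β₀ / α₁) ≠ 0)
    (ζ₁ ζ₂ : ℝ) (hζ : ζ₁ ≠ ζ₂) :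
    ∑ j ∈ Finset.range (k + 1),
      (Q (j : ℤ)).eval ζ₁ * (Q (j : ℤ)).eval ζ₂ /
        ((j.factorial : ℝ) * (ascPochhammer ℝ j).eval ((n : ℝ) + 2) * (β₂ * α₁) ^ j
          * (ascPochhammer ℝ j).eval ((n : ℝ) + 1 + β₀ / α₁))
    = ((Q ((k : ℤ) + 1)).eval ζ₁ * (Q (k : ℤ)).eval ζ₂
        - (Q (k : ℤ)).eval ζ₁ * (Q ((k : ℤ) + 1)).eval ζ₂) /
        ((k.factorial : ℝ) * (ascPochhammer ℝ k).eval ((n : ℝ) + 2) * (β₂ * α₁) ^ k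
          * (ascPochhammer ℝ k).eval ((n : ℝ) + 1 + β₀ / α₁) * (ζ₁ - ζ₂)) := by
  have hζ' : ζ₁ - ζ₂ ≠ 0 := sub_ne_zero.mpr hζ
  induction k with
  | zero =>
    have h1 := hQrec 1 le_rfl
    rw [show ((1:ℕ):ℤ) - 1 = 0 by norm_num, show ((1:ℕ):ℤ) - 2 = -1 by norm_num,
      show ((1:ℕ):ℤ) = 1 by norm_num, hQ0, hQneg] at h1
    push_cast at h1
    simp only [Finset.sum_range_one, Nat.cast_zero, hQ0, Nat.factorial_zero,
      ascPochhammer_zero, eval_one, pow_zero, Nat.cast_one, zero_add,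
      show ((0:ℤ)+1) = ((1:ℕ):ℤ) by norm_num, h1]
    simp only [eval_one, eval_sub, eval_mul, eval_X, eval_C, mul_zero, sub_zero, mul_one, one_mul]
    field_simp
    ring
  | succ k ih =>
    have IH := ih (fun j h1 h2 => hpoch j h1 (h2.trans (Nat.le_succ k)))
    have hcast1 : ((k+1:ℕ):ℤ) = (k:ℤ) + 1 := by push_cast; ring
    have hcast2 : ((k+2:ℕ):ℤ) = (k:ℤ) + 1 + 1 := by push_cast; ring
    rw [Finset.sum_range_succ, IH, hcast1]
    have hrec := hQrec (k+2) (by omega)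
    rw [hcast2, show (k:ℤ)+1+1-1 = (k:ℤ)+1 by ring, show (k:ℤ)+1+1-2 = (k:ℤ) by ring] at hrec
    -- abbreviations
    have hposch2 : ∀ m : ℕ, (ascPochhammer ℝ m).eval ((n:ℝ)+2) ≠ 0 := fun m =>
      ne_of_gt (ascPochhammer_pos m _ (by positivity))
    have hposch1 : ∀ m : ℕ, m ≤ k + 1 →
        (ascPochhammer ℝ m).eval ((n:ℝ)+1+β₀/α₁) ≠ 0 := by
      intro m hm
      rcases Nat.eq_zero_or_pos m with h | h
      · subst h; simp
      · exact hpoch m h hm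
    have hAk : ((k.factorial : ℝ) * (ascPochhammer ℝ k).eval ((n : ℝ) + 2) * (β₂ * α₁) ^ k
          * (ascPochhammer ℝ k).eval ((n : ℝ) + 1 + β₀ / α₁)) ≠ 0 := by
      refine mul_ne_zero (mul_ne_zero (mul_ne_zero ?_ (hposch2 k)) ?_) (hposch1 k (by omega))
      · exact_mod_cast k.factorial_ne_zero
      · exact pow_ne_zero _ (mul_ne_zero hβ₂ hα₁)
    have hc : ((((k:ℝ)+2) - 1) * (((k:ℝ)+2) + (n:ℝ)) * β₂ * ((((k:ℝ)+2) + (n:ℝ) - 1) * α₁ + β₀)) ≠ 0 := by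
      have hAk1 : ((((k+1:ℕ)).factorial : ℝ) * (ascPochhammer ℝ (k+1)).eval ((n : ℝ) + 2)
          * (β₂ * α₁) ^ (k+1) * (ascPochhammer ℝ (k+1)).eval ((n : ℝ) + 1 + β₀ / α₁)) ≠ 0 := by
        refine mul_ne_zero (mul_ne_zero (mul_ne_zero ?_ (hposch2 (k+1))) ?_)
          (hposch1 (k+1) le_rfl)
        · exact_mod_cast (k+1).factorial_ne_zero
        · exact pow_ne_zero _ (mul_ne_zero hβ₂ hα₁)
      rw [heun_aux_A_succ n k α₁ β₀ β₂ hα₁] at hAk1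
      exact (mul_ne_zero_iff.mp hAk1).2
    rw [heun_aux_A_succ n k α₁ β₀ β₂ hα₁, hrec]
    simp only [eval_sub, eval_mul, eval_X, eval_C]
    push_cast
    set a := (Q (k:ℤ)).eval ζ₁ with ha
    set a' := (Q (k:ℤ)).eval ζ₂ with ha'
    set b := (Q ((k:ℤ)+1)).eval ζ₁ with hb
    set b' := (Q ((k:ℤ)+1)).eval ζ₂ with hb'
    set A := ((k.factorial : ℝ) * (ascPochhammer ℝ k).eval ((n : ℝ) + 2) * (β₂ * α₁) ^ k
          * (ascPochhammer ℝ k).eval ((n : ℝ) + 1 + β₀ / α₁)) with hA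
    set c := ((((k:ℝ)+2) - 1) * (((k:ℝ)+2) + (n:ℝ)) * β₂ * ((((k:ℝ)+2) + (n:ℝ) - 1) * α₁ + β₀)) with hcdef
    field_simp
    ring
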